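/- For all integers n ≥ 2, C(n³ - ⌊((n-1)³+1)/2⌋, 3n²-3n+1) + C(n³ - ⌊((n-1)³+2)/2⌋, 3n²-3n+1) < C(n³, 3n²-3n+1). -/

import Mathlib

lemma two_choose_lt (m : ℕ) (hm : 1 ≤ m) (hpar : m % 2 = 1 ∨ 8 ≤ m) :
    2 * m.choose ((m + 1) / 2) < (m + 2).choose ((m + 1) / 2) := by
  rcases Nat.even_or_odd m with he | ho
  · -- even case, m ≥ 8
    have hmod : m % 2 = 0 := Nat.even_iff.mp he
    have h8 : 8 ≤ m := by omega
    obtain ⟨d, rfl⟩ : ∃ d, m = 2 * d + 4 := ⟨(m - 4) / 2, by omega⟩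
    have ha : (2 * d + 4 + 1) / 2 = d + 2 := by omega
    rw [ha]
    have e1 : (2 * d + 4 + 2).choose (d + 2)
        = ((2 * d + 4).choose d + (2 * d + 4).choose (d + 1))
          + ((2 * d + 4).choose (d + 1) + (2 * d + 4).choose (d + 2)) := by
      rw [show 2 * d + 4 + 2 = (2 * d + 5) + 1 by ring,
        Nat.choose_succ_succ' (2 * d + 5) (d + 1),
        show 2 * d + 5 = (2 * d + 4) + 1 by ring,
        Nat.choose_succ_succ' (2 * d + 4) d,
        Nat.choose_succ_succ' (2 * d + 4) (d + 1)]
    have e2 : (2 * d + 4).choose (d + 2) ≤ 2 * (2 * d + 4).choose (d + 1) := by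
      have h := Nat.choose_succ_right_eq (2 * d + 4) (d + 1)
      have h2 : (2 * d + 4).choose (d + 2) * (d + 2)
          ≤ (2 * (2 * d + 4).choose (d + 1)) * (d + 2) := by
        rw [h]
        have : 2 * d + 4 - (d + 1) = d + 3 := by omega
        rw [this]
        nlinarith [Nat.choose_pos (show d + 1 ≤ 2 * d + 4 by omega)]
      exact Nat.le_of_mul_le_mul_right h2 (by omega)
    have e3 : 0 < (2 * d + 4).choose d := Nat.choose_pos (by omega)
    omega
  · -- odd case
    obtain ⟨c, rfl⟩ := ho
    have ha : (2 * c + 1 + 1) / 2 = c + 1 := by omega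
    rw [ha]
    have e1 : (2 * c + 1 + 2).choose (c + 1)
        = (2 * c + 2).choose c + ((2 * c + 1).choose c + (2 * c + 1).choose (c + 1)) := by
      rw [show 2 * c + 1 + 2 = (2 * c + 2) + 1 by ring, Nat.choose_succ_succ',
        show 2 * c + 2 = (2 * c + 1) + 1 by ring, Nat.choose_succ_succ' (2 * c + 1) c]
    have e2 : (2 * c + 1).choose c = (2 * c + 1).choose (c + 1) := by
      have := Nat.choose_symm (show c + 1 ≤ 2 * c + 1 by omega)
      simpa [show 2 * c + 1 - (c + 1) = c by omega] using this
    have e3 : 0 < (2 * c + 2).choose c := Nat.choose_pos (by omega)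
    omega

lemma main_aux (m k : ℕ) (hm : 1 ≤ m) (hk : 2 ≤ k) (hpar : m % 2 = 1 ∨ 8 ≤ m) :
    (m + k - (m + 1) / 2).choose k + (m + k - (m + 2) / 2).choose k
      < (m + k).choose k := by
  set N := m + k with hN
  set a := (m + 1) / 2 with haa
  have ham : a ≤ m := by omega
  have hb : (m + 2) / 2 ≥ a := by omega
  -- the first reduction
  have step1 : (N - (m + 2) / 2).choose k ≤ (N - a).choose k :=
    Nat.choose_le_choose k (by omega)
  -- key identity
  have hid : N.choose a * (N - a).choose k = N.choose k * m.choose a := by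
    have h1 := Nat.choose_mul (n := N) (show a ≤ a + k by omega)
    have h2 := Nat.choose_mul (n := N) (show k ≤ a + k by omega)
    rw [Nat.add_sub_cancel_left] at h1
    rw [show a + k - k = a by omega] at h2
    rw [Nat.choose_symm_add] at h1
    rw [show N - k = m by omega] at h2
    rw [← h1]
    exact h2
  -- key inequality
  have hkey : 2 * m.choose a < N.choose a := by
    calc 2 * m.choose a < (m + 2).choose a := two_choose_lt m hm hpar
      _ ≤ N.choose a := Nat.choose_le_choose a (by omega)
  have hpos : 0 < N.choose k := Nat.choose_pos (by omega)
  have hmain : 2 * (N - a).choose k < N.choose k := by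
    have h3 : N.choose a * (2 * (N - a).choose k) < N.choose a * N.choose k := by
      calc N.choose a * (2 * (N - a).choose k)
          = 2 * (N.choose a * (N - a).choose k) := by ring
        _ = N.choose k * (2 * m.choose a) := by rw [hid]; ring
        _ < N.choose k * N.choose a := by
            exact mul_lt_mul_of_pos_left hkey hpos
        _ = N.choose a * N.choose k := by ring
    exact Nat.lt_of_mul_lt_mul_left h3
  omega

theorem stmt_4 (n : ℕ) (hn : 2 ≤ n) :
    Nat.choose (n ^ 3 - ((n - 1) ^ 3 + 1) / 2) (3 * n ^ 2 - 3 * n + 1) +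
      Nat.choose (n ^ 3 - ((n - 1) ^ 3 + 2) / 2) (3 * n ^ 2 - 3 * n + 1) <
      Nat.choose (n ^ 3) (3 * n ^ 2 - 3 * n + 1) := by
  obtain ⟨p, rfl⟩ : ∃ p, n = p + 2 := ⟨n - 2, by omega⟩
  have hs : p + 2 - 1 = p + 1 := by omega
  have hk : 3 * (p + 2) ^ 2 - 3 * (p + 2) + 1 = 3 * p ^ 2 + 9 * p + 7 := by
    have : 3 * (p + 2) ^ 2 = 3 * p ^ 2 + 12 * p + 12 := by ring
    omega
  have hn3 : (p + 2) ^ 3 = (p + 1) ^ 3 + (3 * p ^ 2 + 9 * p + 7) := by ring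
  rw [hs, hk, hn3]
  have hpar : (p + 1) ^ 3 % 2 = 1 ∨ 8 ≤ (p + 1) ^ 3 := by
    rcases Nat.even_or_odd p with he | ho
    · left
      have : Odd ((p + 1) ^ 3) := (Even.add_one he).pow
      exact Nat.odd_iff.mp this
    · right
      have h2 : 2 ≤ p + 1 := by
        rcases ho with ⟨t, ht⟩; omega
      calc (8 : ℕ) = 2 ^ 3 := by norm_num
        _ ≤ (p + 1) ^ 3 := Nat.pow_le_pow_left h2 3
  exact main_aux ((p + 1) ^ 3) (3 * p ^ 2 + 9 * p + 7) (Nat.one_le_pow _ _ (by omega)) (by omega) hpar
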